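/- Let n ≥ 2, let Δⁿ be the open unit simplex in ℝⁿ, let α ∈ (−∞, 1) with α ≠ 0, and let φ(p) := (1/α) log( Σ_{j=0}^{n−1} p_j^α ), a smooth function on Δⁿ (extended by the same formula to the open positive orthant). Then for every p ∈ Δⁿ: (i) the portfolio map is the diversity-weighted portfolio, π_φ(p) = α ⊗ p, i.e. π_φ(p)_i = p_i^α / Σ_j p_j^α; and (ii) the transport map is the dilation T_φ(p) = (1 − α) ⊗ p, i.e. T_φ(p)_i = p_i^{1−α} / Σ_j p_j^{1−α}. -/

import Mathlib

open Real Set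
open scoped RealInnerProductSpace

/-- The open unit simplex `Δⁿ = {p ∈ (0,1)ⁿ : Σ_i p_i = 1}`. -/
def simplexOpen (n : ℕ) : Set (EuclideanSpace ℝ (Fin n)) :=
  {p | (∀ i, p i ∈ Set.Ioo (0 : ℝ) 1) ∧ ∑ i, p i = 1}

/-- Perturbation (Aitchison addition): `(p ⊕ q)_i = p_i q_i / Σ_j p_j q_j`. -/
noncomputable def oplus {n : ℕ} (p q : EuclideanSpace ℝ (Fin n)) :
    EuclideanSpace ℝ (Fin n) :=
  WithLp.toLp 2 (fun i => p i * q i / ∑ j, p j * q j)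

/-- Powering (Aitchison scalar action): `(α ⊗ p)_i = p_i^α / Σ_j p_j^α`. -/
noncomputable def opow {n : ℕ} (α : ℝ) (p : EuclideanSpace ℝ (Fin n)) :
    EuclideanSpace ℝ (Fin n) :=
  WithLp.toLp 2 (fun i => p i ^ α / ∑ j, p j ^ α)

/-- Aitchison inverse `⊖p = (−1) ⊗ p`. -/
noncomputable def ominus {n : ℕ} (p : EuclideanSpace ℝ (Fin n)) :
    EuclideanSpace ℝ (Fin n) :=
  opow (-1) p

/-- Directional derivative `∇̃_i f(p) = ⟨∇f(p), e_i − p⟩`. -/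
noncomputable def tgrad {n : ℕ} (f : EuclideanSpace ℝ (Fin n) → ℝ)
    (p : EuclideanSpace ℝ (Fin n)) (i : Fin n) : ℝ :=
  ⟪gradient f p, EuclideanSpace.single i (1 : ℝ) - p⟫

/-- Portfolio map `π_φ(p)_i = p_i (1 + ∇̃_i φ(p))`. -/
noncomputable def portfolio {n : ℕ} (φ : EuclideanSpace ℝ (Fin n) → ℝ)
    (p : EuclideanSpace ℝ (Fin n)) : EuclideanSpace ℝ (Fin n) :=
  WithLp.toLp 2 (fun i => p i * (1 + tgrad φ p i))

/-- Transport map `T_φ(p) = p ⊕ π_φ(⊖p)`. -/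
noncomputable def transport {n : ℕ} (φ : EuclideanSpace ℝ (Fin n) → ℝ)
    (p : EuclideanSpace ℝ (Fin n)) : EuclideanSpace ℝ (Fin n) :=
  oplus p (portfolio φ (ominus p))

lemma sumpow_pos' {n : ℕ} (hn : 0 < n) (β : ℝ) (p : EuclideanSpace ℝ (Fin n))
    (hp : ∀ i, 0 < p i) : 0 < ∑ j, p j ^ β :=
  Finset.sum_pos (fun j _ => Real.rpow_pos_of_pos (hp j) β)
    (Finset.univ_nonempty_iff.mpr (Fin.pos_iff_nonempty.mp hn))

lemma gradφ' {n : ℕ} (α : ℝ) (hα0 : α ≠ 0) (p : EuclideanSpace ℝ (Fin n))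
    (hp : ∀ i, 0 < p i) (hS : 0 < ∑ j, p j ^ α) :
    gradient (fun q : EuclideanSpace ℝ (Fin n) => (1/α) * Real.log (∑ j, q j ^ α)) p
      = (WithLp.toLp 2 (fun i => p i ^ (α - 1) / ∑ j, p j ^ α) : EuclideanSpace ℝ (Fin n)) := by
  refine HasGradientAt.gradient ?_
  have h1 : ∀ j : Fin n, HasFDerivAt (fun q : EuclideanSpace ℝ (Fin n) => q j ^ α)
      ((α * p j ^ (α - 1)) • (EuclideanSpace.proj j : EuclideanSpace ℝ (Fin n) →L[ℝ] ℝ)) p :=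
    fun j => ((EuclideanSpace.proj j).hasFDerivAt).rpow_const (Or.inl (hp j).ne')
  have h2 := HasFDerivAt.fun_sum (fun j (_ : j ∈ Finset.univ) => h1 j)
  have h3 := (h2.log hS.ne').const_mul (1/α)
  rw [hasGradientAt_iff_hasFDerivAt]
  convert h3 using 1
  ext v
  simp [InnerProductSpace.toDual_apply_apply, PiLp.inner_apply, Finset.mul_sum, Finset.sum_div]
  ext v
  simp [InnerProductSpace.toDual_apply_apply, PiLp.inner_apply, Finset.mul_sum, Finset.sum_div]
  refine Finset.sum_congr rfl fun j _ => ?_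
  field_simp

lemma tgrad_eq' {n : ℕ} (hn : 0 < n) (α : ℝ) (hα0 : α ≠ 0) (p : EuclideanSpace ℝ (Fin n))
    (hp : ∀ i, 0 < p i) (i : Fin n) :
    tgrad (fun q : EuclideanSpace ℝ (Fin n) => (1/α) * Real.log (∑ j, q j ^ α)) p i
      = p i ^ (α - 1) / (∑ j, p j ^ α) - 1 := by
  have hS := sumpow_pos' hn α p hp
  rw [tgrad, gradφ' α hα0 p hp hS]
  have h1 : ∀ j, (p j ^ (α - 1) / ∑ k, p k ^ α) * p j = p j ^ α / ∑ k, p k ^ α := by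
    intro j
    rw [div_mul_eq_mul_div, ← Real.rpow_add_one (hp j).ne', sub_add_cancel]
  rw [real_inner_comm]
  simp only [PiLp.inner_apply, RCLike.inner_apply, conj_trivial, PiLp.sub_apply,
    EuclideanSpace.single_apply, mul_sub]
  rw [Finset.sum_sub_distrib]
  congr 1
  · rw [Finset.sum_eq_single i] <;> simp +contextual [eq_comm]
  · calc ∑ j, (p j ^ (α - 1) / ∑ k, p k ^ α) * p j
        = ∑ j, p j ^ α / ∑ k, p k ^ α := Finset.sum_congr rfl fun j _ => h1 j
      _ = (∑ j, p j ^ α) / ∑ k, p k ^ α := (Finset.sum_div _ _ _).symm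
      _ = 1 := div_self hS.ne'

lemma portfolio_eq' {n : ℕ} (hn : 0 < n) (α : ℝ) (hα0 : α ≠ 0)
    (q : EuclideanSpace ℝ (Fin n)) (hq : ∀ i, 0 < q i) (i : Fin n) :
    portfolio (fun p : EuclideanSpace ℝ (Fin n) => (1/α) * Real.log (∑ j, p j ^ α)) q i
      = q i ^ α / ∑ j, q j ^ α := by
  show q i * (1 + tgrad _ q i) = _
  rw [tgrad_eq' hn α hα0 q hq i, add_sub_cancel, mul_div_assoc', mul_comm,
    ← Real.rpow_add_one (hq i).ne', sub_add_cancel]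

/-- for `φ(p) = (1/α)log(Σ_j p_j^α)` with `α < 1`, `α ≠ 0`, the portfolio map
is the diversity-weighted portfolio `α ⊗ p` and the transport map is the dilation
`(1 − α) ⊗ p` on the open simplex. -/
theorem stmt_18 (n : ℕ) (hn : 2 ≤ n) (α : ℝ) (hα1 : α < 1) (hα0 : α ≠ 0)
    (φ : EuclideanSpace ℝ (Fin n) → ℝ)
    (hφ : φ = fun p => (1 / α) * Real.log (∑ j, p j ^ α)) :
    ∀ p ∈ simplexOpen n,
      (portfolio φ p = opow α p ∧ ∀ i, portfolio φ p i = p i ^ α / ∑ j, p j ^ α) ∧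
      (transport φ p = opow (1 - α) p ∧
        ∀ i, transport φ p i = p i ^ (1 - α) / ∑ j, p j ^ (1 - α)) := by
  subst hφ
  intro p hp
  have hn0 : 0 < n := lt_of_lt_of_le (by norm_num) hn
  have hp0 : ∀ i, 0 < p i := fun i => (hp.1 i).1
  have hport : ∀ i, portfolio (fun p : EuclideanSpace ℝ (Fin n) =>
      (1/α) * Real.log (∑ j, p j ^ α)) p i = p i ^ α / ∑ j, p j ^ α :=
    portfolio_eq' hn0 α hα0 p hp0
  set R := ∑ j, p j ^ (-1 : ℝ) with hR
  have hRpos : 0 < R := sumpow_pos' hn0 (-1) p hp0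
  have hq0 : ∀ i, 0 < ominus p i := fun i =>
    div_pos (Real.rpow_pos_of_pos (hp0 i) _) hRpos
  have hDpos : 0 < ∑ j, p j ^ (-α) := sumpow_pos' hn0 (-α) p hp0
  have hkey : ∀ k, ominus p k ^ α = p k ^ (-α) / R ^ α := by
    intro k
    show (p k ^ (-1 : ℝ) / R) ^ α = _
    rw [Real.div_rpow (Real.rpow_nonneg (hp0 k).le _) hRpos.le,
      ← Real.rpow_mul (hp0 k).le, neg_one_mul]
  have hπ : ∀ i, portfolio (fun p : EuclideanSpace ℝ (Fin n) =>
      (1/α) * Real.log (∑ j, p j ^ α)) (ominus p) i = p i ^ (-α) / ∑ j, p j ^ (-α) := by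
    intro i
    rw [portfolio_eq' hn0 α hα0 (ominus p) hq0 i]
    simp only [hkey]
    rw [← Finset.sum_div, div_div_div_cancel_right₀ (Real.rpow_pos_of_pos hRpos α).ne']
  have hmul : ∀ j, p j * (p j ^ (-α) / ∑ k, p k ^ (-α))
      = p j ^ (1 - α) / ∑ k, p k ^ (-α) := by
    intro j
    rw [mul_div_assoc', sub_eq_add_neg, Real.rpow_add (hp0 j), Real.rpow_one]
  have htrans : ∀ i, transport (fun p : EuclideanSpace ℝ (Fin n) =>
      (1/α) * Real.log (∑ j, p j ^ α)) p i = p i ^ (1 - α) / ∑ j, p j ^ (1 - α) := by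
    intro i
    show p i * _ / ∑ j, p j * _ = _
    simp only [hπ, hmul]
    rw [← Finset.sum_div, div_div_div_cancel_right₀ hDpos.ne']
  exact ⟨⟨PiLp.ext fun i => (hport i).trans rfl, hport⟩, ⟨PiLp.ext fun i => (htrans i).trans rfl, htrans⟩⟩
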